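/- The reduction from 3-SAT to (2,2)-SAT is truth-preserving: the 3-SAT instance I is satisfiable if and only if the constructed (2,2)-SAT instance f(I) is satisfiable; moreover a satisfying assignment of I lifts to one of f(I) by setting all copies z_i^j equal to u_i, and a satisfying assignment of f(I) restricts to one of I via u_i := z_i^1. -/

import Mathlib

/-- Clauses and CNF formulas: a literal is a variable with a polarity. -/
abbrev Clause (α : Type*) := List (α × Bool)
abbrev CNF (α : Type*) := List (Clause α)

def cnfSat {α : Type*} (F : CNF α) (a : α → Bool) : Prop :=
  ∀ c ∈ F, ∃ l ∈ c, a l.1 = l.2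

variable {n : ℕ}

/-- The polarities of the occurrences of variable `i` in `I`, in order. -/
def occList (I : CNF (Fin n)) (i : Fin n) : List Bool :=
  (I.flatten.filter fun l => l.1 = i).map Prod.snd

/-- The number of occurrences of variable `i` in `I`. -/
def occ (I : CNF (Fin n)) (i : Fin n) : ℕ := (occList I i).length

/-- Number of occurrences of `i` in a single clause. -/
def cnt (i : Fin n) (c : Clause (Fin n)) : ℕ := (c.filter fun l => l.1 = i).length

/-- Occurrence index of the literal at position `q` of clause `p` (for variable `i`):
the number of earlier occurrences of `i`. -/
def occIdx (I : CNF (Fin n)) (p q : ℕ) (i : Fin n) : ℕ :=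
  ((I.take p).map (cnt i)).sum + cnt i ((I.getD p []).take q)

/-- The clause at position `p`, with the `j`-th occurrence of each variable `u_i`
replaced by the fresh copy `z_i^j` (copies are modelled as pairs `(i, j)`). -/
def replClause (I : CNF (Fin n)) (p : ℕ) (c : Clause (Fin n)) : Clause (Fin n × ℕ) :=
  c.mapIdx fun q l => ((l.1, occIdx I p q l.1), l.2)

def replClauses (I : CNF (Fin n)) : CNF (Fin n × ℕ) :=
  I.mapIdx fun p c => replClause I p c

/-- The cyclic consistency clauses `(z_i^j ∨ ¬ z_i^{j+1 mod occ i})`. -/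
def consistencyClauses (I : CNF (Fin n)) : CNF (Fin n × ℕ) :=
  ((List.finRange n).map fun i =>
    (List.range (occ I i)).map fun j =>
      [((i, j), true), ((i, (j + 1) % occ I i), false)]).flatten

/-- The rest clause: one more occurrence of each copy `z_i^j`, with polarity opposite to
its occurrence in the replaced clauses, so that every copy occurs exactly twice negated
and twice unnegated. -/
def restClause (I : CNF (Fin n)) : Clause (Fin n × ℕ) :=
  ((List.finRange n).map fun i =>
    (List.range (occ I i)).map fun j => ((i, j), !((occList I i).getD j true))).flatten

/-- The constructed (2,2)-SAT instance `f(I)`. -/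
def reduct (I : CNF (Fin n)) : CNF (Fin n × ℕ) :=
  replClauses I ++ consistencyClauses I ++ [restClause I]

section Aux
variable {n : ℕ}

lemma occ_eq (I : CNF (Fin n)) (i : Fin n) : occ I i = (I.map (cnt i)).sum := by
  simp only [occ, occList, List.length_map, List.filter_flatten,
    List.length_flatten, List.map_map, Function.comp_def, cnt]
  rfl

lemma occIdx_lt {I : CNF (Fin n)} {p q : ℕ} {i : Fin n} (hp : p < I.length)
    (hq : q < I[p].length) (hi : I[p][q].1 = i) : occIdx I p q i < occ I i := by
  have hd : I.getD p [] = I[p] := List.getD_eq_getElem I [] hp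
  rw [occ_eq, occIdx, hd]
  have h1 : cnt i (I[p].take q) + 1 ≤ cnt i I[p] := by
    have hsub : (I[p].take (q+1)).Sublist I[p] := List.take_sublist _ _
    have hle : cnt i (I[p].take (q+1)) ≤ cnt i I[p] :=
      List.Sublist.length_le (hsub.filter _)
    have : cnt i (I[p].take (q+1)) = cnt i (I[p].take q) + 1 := by
      rw [List.take_succ, List.getElem?_eq_getElem hq]
      simp only [Option.toList_some, cnt, List.filter_append, List.length_append]
      simp [List.filter_cons, hi]
    omega
  have h2 : ((I.take p).map (cnt i)).sum + cnt i I[p] ≤ (I.map (cnt i)).sum := by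
    conv_rhs => rw [← List.take_append_drop p I, ← List.getElem_cons_drop hp]
    rw [List.map_append, List.sum_append, List.map_cons, List.sum_cons]
    omega
  omega

lemma mem_occList {I : CNF (Fin n)} {i : Fin n} {b : Bool} :
    b ∈ occList I i ↔ ∃ c ∈ I, (i, b) ∈ c := by
  simp only [occList, List.mem_map, List.mem_filter, List.mem_flatten, decide_eq_true_eq]
  constructor
  · rintro ⟨⟨x, y⟩, ⟨⟨c, hc, hm⟩, h1⟩, h2⟩
    simp only at h1 h2
    subst h1; subst h2; exact ⟨c, hc, hm⟩
  · rintro ⟨c, hc, hm⟩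
    exact ⟨(i, b), ⟨⟨c, hc, hm⟩, rfl⟩, rfl⟩

lemma consistency_mem {I : CNF (Fin n)} {i : Fin n} {j : ℕ} (hj : j < occ I i) :
    [((i, j), true), ((i, (j + 1) % occ I i), false)] ∈ consistencyClauses I := by
  simp only [consistencyClauses, List.mem_flatten, List.mem_map]
  exact ⟨_, ⟨i, List.mem_finRange i, rfl⟩, List.mem_map.2 ⟨j, List.mem_range.2 hj, rfl⟩⟩

lemma cycle_const {I : CNF (Fin n)} {z : Fin n × ℕ → Bool}
    (hz : ∀ i : Fin n, ∀ j < occ I i, z (i, j) = true ∨ z (i, (j + 1) % occ I i) = false)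
    {i : Fin n} {j : ℕ} (hj : j < occ I i) : z (i, j) = z (i, 0) := by
  set k := occ I i with hk
  have hk0 : 0 < k := Nat.lt_of_le_of_lt (Nat.zero_le j) hj
  cases h0 : z (i, 0) with
  | false =>
    have claim : ∀ m, m < k → z (i, m) = false := by
      intro m
      induction m with
      | zero => exact fun _ => h0
      | succ m ih =>
        intro hm1
        have hm : m < k := Nat.lt_of_succ_lt hm1
        have h := hz i m hm
        rw [Nat.mod_eq_of_lt hm1] at h
        rcases h with h | h
        · rw [ih hm] at h; exact absurd h (by simp)
        · exact h
    exact claim j hj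
  | true =>
    have claim : ∀ m, m < k → z (i, k - 1 - m) = true := by
      intro m
      induction m with
      | zero =>
        intro _
        have h := hz i (k - 1) (by omega)
        rw [Nat.sub_add_cancel hk0, Nat.mod_self] at h
        rcases h with h | h
        · simpa using h
        · rw [h0] at h; exact absurd h (by simp)
      | succ m ih =>
        intro hm1
        have hm : m < k := Nat.lt_of_succ_lt hm1
        have h := hz i (k - 1 - (m + 1)) (by omega)
        have harith : k - 1 - (m + 1) + 1 = k - 1 - m := by omega
        rw [harith, Nat.mod_eq_of_lt (by omega)] at h
        rcases h with h | h
        · exact h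
        · rw [ih hm] at h; exact absurd h (by simp)
    have h := claim (k - 1 - j) (by omega)
    have harith : k - 1 - (k - 1 - j) = j := by omega
    rw [harith] at h
    exact h

lemma lift_sat {I : CNF (Fin n)} {a : Fin n → Bool}
    (hnontriv : ∃ i : Fin n, (∃ c ∈ I, (i, true) ∈ c) ∧ ∃ c' ∈ I, (i, false) ∈ c')
    (ha : cnfSat I a) : cnfSat (reduct I) fun p => a p.1 := by
  intro c hc
  simp only [reduct, List.mem_append, List.mem_singleton] at hc
  rcases hc with (hc | hc) | hc
  · -- replClauses
    rw [List.mem_iff_getElem] at hc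
    obtain ⟨p, hp, hceq⟩ := hc
    simp only [replClauses, List.length_mapIdx] at hp
    have hplen : p < I.length := hp
    simp only [replClauses, List.getElem_mapIdx] at hceq
    obtain ⟨l, hl, hal⟩ := ha I[p] (List.getElem_mem hplen)
    rw [List.mem_iff_getElem] at hl
    obtain ⟨q, hq, hleq⟩ := hl
    refine ⟨((l.1, occIdx I p q l.1), l.2), ?_, hal⟩
    rw [← hceq]
    rw [List.mem_iff_getElem]
    refine ⟨q, by simpa [replClause] using hq, ?_⟩
    simp only [replClause, List.getElem_mapIdx, hleq]
  · -- consistencyClauses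
    simp only [consistencyClauses, List.mem_flatten, List.mem_map] at hc
    obtain ⟨L, ⟨i, _, hL⟩, hcL⟩ := hc
    subst hL
    obtain ⟨j, hj, hceq⟩ := List.mem_map.1 hcL
    subst hceq
    cases h : a i with
    | true => exact ⟨((i, j), true), by simp, h⟩
    | false => exact ⟨((i, (j + 1) % occ I i), false), by simp, h⟩
  · -- restClause
    subst hc
    obtain ⟨i, ⟨c1, hc1, hm1⟩, ⟨c2, hc2, hm2⟩⟩ := hnontriv
    have hb : (!(a i)) ∈ occList I i := by
      cases h : a i with
      | true => exact mem_occList.2 ⟨c2, hc2, hm2⟩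
      | false => exact mem_occList.2 ⟨c1, hc1, hm1⟩
    rw [List.mem_iff_getElem] at hb
    obtain ⟨j, hj, hjb⟩ := hb
    refine ⟨((i, j), !((occList I i).getD j true)), ?_, ?_⟩
    · simp only [restClause, List.mem_flatten, List.mem_map]
      exact ⟨_, ⟨i, List.mem_finRange i, rfl⟩, List.mem_map.2 ⟨j, List.mem_range.2 hj, rfl⟩⟩
    · rw [List.getD_eq_getElem _ _ hj, hjb]
      simp

lemma restrict_sat {I : CNF (Fin n)} {z : Fin n × ℕ → Bool}
    (hz : cnfSat (reduct I) z) : cnfSat I fun i => z (i, 0) := by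
  have hcons : ∀ i : Fin n, ∀ j < occ I i,
      z (i, j) = true ∨ z (i, (j + 1) % occ I i) = false := by
    intro i j hj
    have := hz _ (by
      simp only [reduct, List.mem_append]
      exact Or.inl (Or.inr (consistency_mem hj)))
    obtain ⟨l, hl, hzl⟩ := this
    simp only [List.mem_cons, List.mem_singleton, List.not_mem_nil, or_false] at hl
    rcases hl with rfl | rfl
    · exact Or.inl hzl
    · exact Or.inr hzl
  intro c hc
  rw [List.mem_iff_getElem] at hc
  obtain ⟨p, hp, rfl⟩ := hc
  have hrc : replClause I p I[p] ∈ reduct I := by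
    simp only [reduct, List.mem_append]
    refine Or.inl (Or.inl ?_)
    rw [List.mem_iff_getElem]
    exact ⟨p, by simpa [replClauses] using hp,
      by simp only [replClauses, List.getElem_mapIdx]⟩
  obtain ⟨l, hl, hzl⟩ := hz _ hrc
  rw [List.mem_iff_getElem] at hl
  obtain ⟨q, hq, hleq⟩ := hl
  have hqc : q < I[p].length := by simpa [replClause] using hq
  simp only [replClause, List.getElem_mapIdx] at hleq
  subst hleq
  have hlt : occIdx I p q I[p][q].1 < occ I I[p][q].1 := occIdx_lt hp hqc rfl
  refine ⟨I[p][q], List.getElem_mem hqc, ?_⟩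
  simp only at hzl ⊢
  exact (cycle_const hcons hlt).symm.trans hzl

end Aux

/-- the reduction from 3-SAT to (2,2)-SAT is truth-preserving: `I` is
satisfiable iff `f(I)` is; a satisfying assignment of `I` lifts by copying values to all
copies, and a satisfying assignment of `f(I)` restricts via `u_i := z_i^0`. -/
theorem stmt12 (I : CNF (Fin n))
    (h3 : ∀ c ∈ I, c.length ≤ 3)
    (hnontriv : ∃ i : Fin n, (∃ c ∈ I, (i, true) ∈ c) ∧ ∃ c' ∈ I, (i, false) ∈ c') :
    ((∃ a : Fin n → Bool, cnfSat I a) ↔ ∃ z : Fin n × ℕ → Bool, cnfSat (reduct I) z) ∧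
    (∀ a : Fin n → Bool, cnfSat I a → cnfSat (reduct I) fun p => a p.1) ∧
    (∀ z : Fin n × ℕ → Bool, cnfSat (reduct I) z → cnfSat I fun i => z (i, 0)) := by
  refine ⟨⟨fun ⟨a, ha⟩ => ⟨fun p => a p.1, lift_sat hnontriv ha⟩,
          fun ⟨z, hz⟩ => ⟨fun i => z (i, 0), restrict_sat hz⟩⟩,
         fun a ha => lift_sat hnontriv ha, fun z hz => restrict_sat hz⟩
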